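/- arXiv:2112.10596 — 3 statements merged into one kernel-verified Lean document; each statement's English description precedes it below -/
import Mathlib

section
/- Two measurements m_1 = (f_i)_{i=1}^{n_1} and m_2 = (g_j)_{j=1}^{n_2} on a state space K (effects in E(K) summing to 1_K) admit a joint measurement (h_{ij}) in E(K) with marginals f_i = Σ_j h_{ij}, g_j = Σ_i h_{ij} if and only if there exists a finite family (h_λ)_{λ∈Λ} of effects in E(K) with Σ_λ h_λ = 1_K and conditional probability distributions p(i|1,λ), p(j|2,λ) such that f_i = Σ_λ p(i|1,λ) h_λ and g_j = Σ_λ p(j|2,λ) h_λ. -/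
open Finset

variable {V : Type*} [NormedAddCommGroup V] [NormedSpace ℝ V] [FiniteDimensional ℝ V]

/-- The effect algebra `E(K)`: affine functions with values in `[0,1]` on `K`. -/
def effectAlgebra (K : Set V) : Set (V →ᵃ[ℝ] ℝ) :=
  {f | ∀ x ∈ K, f x ∈ Set.Icc (0 : ℝ) 1}

lemma affineMap_sum_apply {ι : Type*} (s : Finset ι) (F : ι → (V →ᵃ[ℝ] ℝ)) (x : V) :
    (∑ i ∈ s, F i) x = ∑ i ∈ s, F i x := by
  induction s using Finset.cons_induction with
  | empty => simp
  | cons a s ha ih => simp [Finset.sum_cons, ih]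

/-- Two measurements admit a joint measurement if and only if they are both
post-processings of a single common measurement. -/
theorem jointMeasurement_iff_postprocessing
    (K : Set V) (hKcomp : IsCompact K) (hKconv : Convex ℝ K)
    {n₁ n₂ : ℕ} (f : Fin n₁ → (V →ᵃ[ℝ] ℝ)) (g : Fin n₂ → (V →ᵃ[ℝ] ℝ))
    (hf : ∀ i, f i ∈ effectAlgebra K) (hg : ∀ j, g j ∈ effectAlgebra K)
    (hfsum : ∀ x ∈ K, ∑ i, f i x = 1) (hgsum : ∀ x ∈ K, ∑ j, g j x = 1) :
    (∃ h : Fin n₁ → Fin n₂ → (V →ᵃ[ℝ] ℝ),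
      (∀ i j, h i j ∈ effectAlgebra K) ∧
      (∀ i, ∀ x ∈ K, f i x = ∑ j, h i j x) ∧
      (∀ j, ∀ x ∈ K, g j x = ∑ i, h i j x)) ↔
    (∃ (N : ℕ) (h : Fin N → (V →ᵃ[ℝ] ℝ))
        (p : Fin n₁ → Fin N → ℝ) (q : Fin n₂ → Fin N → ℝ),
      (∀ lam, h lam ∈ effectAlgebra K) ∧
      (∀ x ∈ K, ∑ lam, h lam x = 1) ∧
      (∀ i lam, 0 ≤ p i lam) ∧ (∀ lam, ∑ i, p i lam = 1) ∧
      (∀ j lam, 0 ≤ q j lam) ∧ (∀ lam, ∑ j, q j lam = 1) ∧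
      (∀ i, ∀ x ∈ K, f i x = ∑ lam, p i lam * h lam x) ∧
      (∀ j, ∀ x ∈ K, g j x = ∑ lam, q j lam * h lam x)) := by
  constructor
  · rintro ⟨h, hh, hhf, hhg⟩
    refine ⟨n₁ * n₂, fun lam => h (finProdFinEquiv.symm lam).1 (finProdFinEquiv.symm lam).2,
      fun i lam => if (finProdFinEquiv.symm lam).1 = i then 1 else 0,
      fun j lam => if (finProdFinEquiv.symm lam).2 = j then 1 else 0,
      fun lam => hh _ _, ?_, ?_, ?_, ?_, ?_, ?_, ?_⟩
    · intro x hx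
      rw [← Equiv.sum_comp finProdFinEquiv
        (fun lam => h (finProdFinEquiv.symm lam).1 (finProdFinEquiv.symm lam).2 x)]
      simp only [Equiv.symm_apply_apply]
      rw [Fintype.sum_prod_type]
      rw [← hfsum x hx]
      exact Finset.sum_congr rfl fun i _ => (hhf i x hx).symm
    · intro i lam; positivity
    · intro lam; simp
    · intro j lam; positivity
    · intro lam; simp
    · intro i x hx
      rw [← Equiv.sum_comp finProdFinEquiv (fun lam =>
        (if (finProdFinEquiv.symm lam).1 = i then (1:ℝ) else 0) *
          h (finProdFinEquiv.symm lam).1 (finProdFinEquiv.symm lam).2 x)]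
      simp only [Equiv.symm_apply_apply]
      rw [Fintype.sum_prod_type]
      rw [hhf i x hx]
      rw [Finset.sum_eq_single i]
      · simp
      · intro b _ hb; simp [hb]
      · simp
    · intro j x hx
      rw [← Equiv.sum_comp finProdFinEquiv (fun lam =>
        (if (finProdFinEquiv.symm lam).2 = j then (1:ℝ) else 0) *
          h (finProdFinEquiv.symm lam).1 (finProdFinEquiv.symm lam).2 x)]
      simp only [Equiv.symm_apply_apply]
      rw [Fintype.sum_prod_type_right]
      rw [hhg j x hx]
      rw [Finset.sum_eq_single j]
      · simp
      · intro b _ hb; simp [hb]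
      · simp
  · rintro ⟨N, h, p, q, hh, hhsum, hp, hpsum, hq, hqsum, hpf, hqg⟩
    refine ⟨fun i j => ∑ lam, (p i lam * q j lam) • h lam, ?_, ?_, ?_⟩
    · intro i j x hx
      rw [affineMap_sum_apply]
      constructor
      · apply Finset.sum_nonneg
        intro lam _
        have := (hh lam x hx).1
        simp only [AffineMap.coe_smul, Pi.smul_apply, smul_eq_mul]
        have := hp i lam; have := hq j lam
        positivity
      · calc ∑ lam, ((p i lam * q j lam) • h lam) x
            ≤ ∑ lam, h lam x := by
              apply Finset.sum_le_sum
              intro lam _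
              simp only [AffineMap.coe_smul, Pi.smul_apply, smul_eq_mul]
              have h0 := (hh lam x hx).1
              have hp1 : p i lam ≤ 1 := by
                calc p i lam ≤ ∑ i', p i' lam :=
                      Finset.single_le_sum (fun i' _ => hp i' lam) (Finset.mem_univ i)
                  _ = 1 := hpsum lam
              have hq1 : q j lam ≤ 1 := by
                calc q j lam ≤ ∑ j', q j' lam :=
                      Finset.single_le_sum (fun j' _ => hq j' lam) (Finset.mem_univ j)
                  _ = 1 := hqsum lam
              have hpq : p i lam * q j lam ≤ 1 := by nlinarith [hp i lam, hq j lam]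
              nlinarith [mul_nonneg (sub_nonneg.mpr hpq) h0]
          _ = 1 := hhsum x hx
    · intro i x hx
      rw [hpf i x hx]
      have e : ∀ j, (∑ lam, (p i lam * q j lam) • h lam) x
          = ∑ lam, p i lam * q j lam * h lam x := by
        intro j; rw [affineMap_sum_apply]; simp
      rw [Finset.sum_congr rfl fun j _ => e j, Finset.sum_comm]
      apply Finset.sum_congr rfl
      intro lam _
      symm
      calc ∑ j, p i lam * q j lam * h lam x
          = ∑ j, q j lam * (p i lam * h lam x) := by
            apply Finset.sum_congr rfl; intro j _; ring
        _ = (∑ j, q j lam) * (p i lam * h lam x) := (Finset.sum_mul ..).symm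
        _ = p i lam * h lam x := by rw [hqsum lam, one_mul]
    · intro j x hx
      rw [hqg j x hx]
      have e : ∀ i, (∑ lam, (p i lam * q j lam) • h lam) x
          = ∑ lam, p i lam * q j lam * h lam x := by
        intro i; rw [affineMap_sum_apply]; simp
      rw [Finset.sum_congr rfl fun i _ => e i, Finset.sum_comm]
      apply Finset.sum_congr rfl
      intro lam _
      symm
      calc ∑ i, p i lam * q j lam * h lam x
          = ∑ i, p i lam * (q j lam * h lam x) := by
            apply Finset.sum_congr rfl; intro i _; ring
        _ = (∑ i, p i lam) * (q j lam * h lam x) := (Finset.sum_mul ..).symm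
        _ = q j lam * h lam x := by rw [hpsum lam, one_mul]
end

section
/- Let K be a compact convex subset of a finite-dimensional real vector space with full effect algebra E(K). If (K, E(K)) is simplex-embeddable (there are a simplex S_Λ and affine maps ι : K → S_Λ, κ* : S_Λ → K with κ* ∘ ι = id_K in the sense that f(κ*(ι(ρ))) = f(ρ) for all effects f and ρ ∈ K), then K is a simplex. -/
open Finset

variable {V : Type*} [NormedAddCommGroup V] [NormedSpace ℝ V] [FiniteDimensional ℝ V]

/-- If the unrestricted theory `(K, E(K))` is simplex-embeddable — there are a
simplex `S_Λ`, an affine `ι : K → S_Λ` (components `h_λ ∈ E(K)`) and an affine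
`κ* : S_Λ → K` (vertex images `σ_λ ∈ K`) with `f(κ*(ι(ρ))) = f(ρ)` for all
effects `f` — then `K` is a simplex. -/
theorem simplexEmbeddable_noRestriction_implies_simplex
    (K : Set V) (hKcomp : IsCompact K) (hKconv : Convex ℝ K)
    (hembed : ∃ (N : ℕ) (h : Fin N → (V →ᵃ[ℝ] ℝ)) (σ : Fin N → V),
      (∀ lam, h lam ∈ effectAlgebra K) ∧
      (∀ ρ ∈ K, ∑ lam, h lam ρ = 1) ∧
      (∀ lam, σ lam ∈ K) ∧
      (∀ f ∈ effectAlgebra K, ∀ ρ ∈ K, f (∑ lam, h lam ρ • σ lam) = f ρ)) :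
    ∃ (n : ℕ) (s : Fin n → V), AffineIndependent ℝ s ∧ K = convexHull ℝ (Set.range s) := by
  classical
  obtain ⟨N, h, σ, hEf, hsum, hσK, hretr⟩ := hembed
  -- Step 1: the retraction is the identity on K (effects separate points).
  have hsep : ∀ ρ ∈ K, (∑ lam, h lam ρ • σ lam) = ρ := by
    intro ρ hρ
    set x := ∑ lam, h lam ρ • σ lam with hxdef
    by_contra hne
    obtain ⟨g, _, hgval⟩ := exists_dual_vector ℝ (x - ρ) (norm_ne_zero_iff.2 (sub_ne_zero.2 hne))
    obtain ⟨C0, hC0⟩ := hKcomp.exists_bound_of_continuousOn g.continuous.continuousOn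
    set C : ℝ := max C0 0 with hCdef
    have hCnn : (0:ℝ) ≤ C := le_max_right _ _
    have hCpos : (0:ℝ) < 2*C + 1 := by positivity
    set f : V →ᵃ[ℝ] ℝ :=
      (2*C+1)⁻¹ • (g.toLinearMap.toAffineMap + AffineMap.const ℝ V C) with hfdef
    have hfapp : ∀ z, f z = (2*C+1)⁻¹ * (g z + C) := by
      intro z; simp [hfdef, smul_eq_mul]; ring
    have hgbd : ∀ z ∈ K, |g z| ≤ C := by
      intro z hz
      exact le_trans (by simpa [Real.norm_eq_abs] using hC0 z hz) (le_max_left _ _)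
    have hf : f ∈ effectAlgebra K := by
      intro z hz
      obtain ⟨hb1, hb2⟩ := abs_le.1 (hgbd z hz)
      have h1 : 0 ≤ g z + C := by linarith
      have h2 : g z + C ≤ 2*C + 1 := by linarith
      constructor
      · rw [hfapp]; exact mul_nonneg (by positivity) h1
      · rw [hfapp]
        calc (2*C+1)⁻¹ * (g z + C) ≤ (2*C+1)⁻¹ * (2*C+1) :=
              mul_le_mul_of_nonneg_left h2 (by positivity)
          _ = 1 := inv_mul_cancel₀ hCpos.ne'
    have hxK : x ∈ K :=
      hKconv.sum_mem (fun lam _ => (hEf lam ρ hρ).1) (hsum ρ hρ) (fun lam _ => hσK lam)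
    have hfeq := hretr f hf ρ hρ
    rw [hfapp, hfapp] at hfeq
    have hgeq : g x = g ρ := by
      have := mul_left_cancel₀ (inv_ne_zero hCpos.ne') hfeq
      linarith
    have hnorm : ‖x - ρ‖ = 0 := by
      have h' := hgval
      rw [map_sub, hgeq, sub_self] at h'
      exact_mod_cast h'.symm
    exact (sub_ne_zero.2 hne) (norm_eq_zero.1 hnorm)
  -- Step 2: K is the convex hull of the σ's.
  have hKhull : K = convexHull ℝ (Set.range σ) := by
    apply Set.Subset.antisymm
    · intro ρ hρ
      rw [← hsep ρ hρ]
      exact (convex_convexHull ℝ _).sum_mem (fun lam _ => (hEf lam ρ hρ).1) (hsum ρ hρ)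
        (fun lam _ => subset_convexHull ℝ _ ⟨lam, rfl⟩)
    · exact convexHull_min (Set.range_subset_iff.2 hσK) hKconv
  -- Step 3: K is the convex hull of its (finitely many) extreme points.
  have hEsub : K.extremePoints ℝ ⊆ Set.range σ := by
    rw [hKhull]; exact extremePoints_convexHull_subset
  have hEfin : (K.extremePoints ℝ).Finite := (Set.finite_range σ).subset hEsub
  have hKE : K = convexHull ℝ (K.extremePoints ℝ) := by
    have hcl := closure_convexHull_extremePoints hKcomp hKconv
    rw [(hEfin.isClosed_convexHull ℝ).closure_eq] at hcl
    exact hcl.symm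
  obtain ⟨n, sE, hrange⟩ := hEfin.fin_embedding
  have hsjE : ∀ j, (sE j : V) ∈ K.extremePoints ℝ := by
    intro j; rw [← hrange]; exact ⟨j, rfl⟩
  have hsjK : ∀ j, (sE j : V) ∈ K := fun j => (hsjE j).1
  -- Lemma A: at an extreme point, foreign coordinates vanish.
  have lemA : ∀ e ∈ K.extremePoints ℝ, ∀ lam, σ lam ≠ e → h lam e = 0 := by
    intro e he lam hlam
    by_contra h0
    have heK : e ∈ K := he.1
    have ht0 : 0 < h lam e := lt_of_le_of_ne (hEf lam e heK).1 (Ne.symm h0)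
    have ht1 : h lam e ≤ 1 := (hEf lam e heK).2
    have hsplit : ∑ μ ∈ univ.erase lam, h μ e • σ μ + h lam e • σ lam = e := by
      rw [Finset.sum_erase_add univ _ (mem_univ lam)]
      exact hsep e heK
    have hsum' : ∑ μ ∈ univ.erase lam, h μ e = 1 - h lam e := by
      have := Finset.sum_erase_add univ (fun μ => h μ e) (mem_univ lam)
      have h2 := hsum e heK
      linarith [this.trans h2]
    rcases eq_or_lt_of_le ht1 with h1 | h1
    · -- h lam e = 1, so all other coordinates vanish and e = σ lam
      have hz : ∀ μ ∈ univ.erase lam, h μ e = 0 := by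
        have hzero : ∑ μ ∈ univ.erase lam, h μ e = 0 := by rw [hsum']; linarith
        exact fun μ hμ =>
          (Finset.sum_eq_zero_iff_of_nonneg (fun ν _ => (hEf ν e heK).1)).1 hzero μ hμ
      have : e = σ lam := by
        rw [← hsplit, Finset.sum_eq_zero (fun μ hμ => by rw [hz μ hμ, zero_smul]),
          zero_add, h1, one_smul]
      exact hlam this.symm
    · -- 0 < h lam e < 1 : e is in an open segment from σ lam
      set t := h lam e
      have h1t : 0 < 1 - t := by linarith
      set y : V := (1-t)⁻¹ • ∑ μ ∈ univ.erase lam, h μ e • σ μ with hydef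
      have hyK : y ∈ K := by
        have : y = ∑ μ ∈ univ.erase lam, ((1-t)⁻¹ * h μ e) • σ μ := by
          rw [hydef, Finset.smul_sum]
          exact Finset.sum_congr rfl (fun μ _ => by rw [smul_smul])
        rw [this]
        refine hKconv.sum_mem (fun μ _ => mul_nonneg (by positivity) (hEf μ e heK).1) ?_
          (fun μ _ => hσK μ)
        rw [← Finset.mul_sum, hsum', mul_comm]
        exact mul_inv_cancel₀ h1t.ne'
      have hseg : e ∈ openSegment ℝ (σ lam) y := by
        refine ⟨t, 1 - t, ht0, h1t, by ring, ?_⟩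
        rw [hydef, smul_smul, mul_inv_cancel₀ h1t.ne', one_smul, add_comm]
        exact hsplit
      exact hlam (he.2 (hσK lam) hyK hseg)
  -- Lemma B: coordinate extraction — uniqueness of affine representations.
  have lemB : ∀ (c : Fin n → ℝ), ∑ j, c j = 1 → ∀ j0,
      c j0 = ∑ lam ∈ univ.filter (fun lam => σ lam = sE j0),
        h lam (∑ j, c j • (sE j : V)) := by
    intro c hc j0
    set x := ∑ j, c j • (sE j : V) with hxdef
    set F := univ.filter (fun lam => σ lam = sE j0) with hFdef
    have happ : ∀ lam, h lam x = ∑ j, c j * h lam (sE j) := by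
      intro lam
      rw [hxdef, ← Finset.univ.affineCombination_eq_linear_combination (fun j => (sE j : V)) c hc,
        Finset.univ.map_affineCombination (fun j => (sE j : V)) c hc (h lam),
        Finset.univ.affineCombination_eq_linear_combination _ _ hc]
      simp [Function.comp, smul_eq_mul]
    have hswap : ∑ lam ∈ F, h lam x = ∑ j, c j * ∑ lam ∈ F, h lam (sE j) := by
      rw [Finset.sum_congr rfl (fun lam _ => happ lam), Finset.sum_comm]
      exact Finset.sum_congr rfl (fun j _ => by rw [Finset.mul_sum])
    rw [hswap, Finset.sum_eq_single j0]
    · -- at j0 the inner sum is 1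
      have hfull : ∑ lam ∈ F, h lam (sE j0) = ∑ lam, h lam (sE j0) := by
        apply Finset.sum_subset (Finset.filter_subset _ _)
        intro lam _ hlam
        simp only [hFdef, Finset.mem_filter, Finset.mem_univ, true_and] at hlam
        exact lemA (sE j0) (hsjE j0) lam hlam
      rw [hfull, hsum (sE j0) (hsjK j0), mul_one]
    · intro j _ hj
      have hzero : ∑ lam ∈ F, h lam (sE j) = 0 := by
        apply Finset.sum_eq_zero
        intro lam hlam
        simp only [hFdef, Finset.mem_filter, Finset.mem_univ, true_and] at hlam
        apply lemA (sE j) (hsjE j) lam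
        rw [hlam]
        intro hcontra
        exact hj (sE.injective hcontra).symm
      rw [hzero, mul_zero]
    · intro hj0; exact absurd (mem_univ j0) hj0
  -- Assemble: affine independence from uniqueness of representations.
  refine ⟨n, fun j => (sE j : V), ?_, by rw [hrange] at *; exact hKE⟩
  rw [affineIndependent_iff_of_fintype]
  intro w hw hvsub j
  rw [Finset.weightedVSub_eq_linear_combination _ hw] at hvsub
  set c : Fin n → ℝ := fun i => w i + if i = j then 1 else 0 with hcdef
  set c' : Fin n → ℝ := fun i => if i = j then 1 else 0 with hc'def
  have hc'sum : ∑ i, c' i = 1 := by simp [hc'def]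
  have hcsum : ∑ i, c i = 1 := by
    rw [hcdef]; rw [Finset.sum_add_distrib, hw, zero_add]; simp
  have hpts : ∑ i, c i • (sE i : V) = ∑ i, c' i • (sE i : V) := by
    rw [hcdef, hc'def]
    simp only [add_smul]
    rw [Finset.sum_add_distrib, hvsub, zero_add]
  have h1 := lemB c hcsum j
  have h2 := lemB c' hc'sum j
  rw [hpts] at h1
  rw [← h2] at h1
  have : w j + 1 = 1 := by simpa [hcdef, hc'def] using h1
  linarith
end

section
/- Let K = S_3 be a triangle (2-simplex) and let S(E) be its circumscribed disc, with E the effects of S(E) restricted to K. Then every pair of measurements with effects in E is E(K)-compatible (since K is a simplex), but there exists a pair of two-outcome measurements with effects in E that is E-incompatible (i.e., admits no joint measurement with effects in E). -/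
open Finset

/-- The disc `S(E)`: the state space of the restricted theory. -/
def disc : Set (ℝ × ℝ) := {x | x.1 ^ 2 + x.2 ^ 2 ≤ 1}

/-- The triangle `K = S₃` inscribed in the disc. -/
noncomputable def triangle : Set (ℝ × ℝ) :=
  convexHull ℝ {((0 : ℝ), (1 : ℝ)), (-(Real.sqrt 3) / 2, -(1 / 2 : ℝ)),
    (Real.sqrt 3 / 2, -(1 / 2 : ℝ))}

/-- The restricted effects `E`: affine functions with values in `[0,1]` on the
whole disc `S(E)` (restricted to `K`). -/
def discEffects : Set ((ℝ × ℝ) →ᵃ[ℝ] ℝ) :=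
  {f | ∀ x ∈ disc, f x ∈ Set.Icc (0 : ℝ) 1}

/-- A general affine map `ℝ² → ℝ`. -/
noncomputable def aff (a b c : ℝ) : (ℝ × ℝ) →ᵃ[ℝ] ℝ where
  toFun p := a * p.1 + b * p.2 + c
  linear := a • LinearMap.fst ℝ ℝ ℝ + b • LinearMap.snd ℝ ℝ ℝ
  map_vadd' p v := by
    simp only [LinearMap.add_apply, LinearMap.smul_apply, LinearMap.fst_apply,
      LinearMap.snd_apply, smul_eq_mul, vadd_eq_add, Prod.fst_add, Prod.snd_add]
    ring

@[simp] lemma aff_apply (a b c : ℝ) (p : ℝ × ℝ) : aff a b c p = a * p.1 + b * p.2 + c := rfl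

noncomputable def v0 : ℝ × ℝ := ((0 : ℝ), (1 : ℝ))
noncomputable def v1 : ℝ × ℝ := (-(Real.sqrt 3) / 2, -(1 / 2 : ℝ))
noncomputable def v2 : ℝ × ℝ := (Real.sqrt 3 / 2, -(1 / 2 : ℝ))

lemma triangle_def : triangle = convexHull ℝ {v0, v1, v2} := rfl

lemma v0_mem : v0 ∈ triangle := subset_convexHull ℝ _ (by simp [v0])
lemma v1_mem : v1 ∈ triangle := subset_convexHull ℝ _ (by simp [v1, triangle])
lemma v2_mem : v2 ∈ triangle := subset_convexHull ℝ _ (by simp [v2, triangle])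

lemma sqrt3_sq : Real.sqrt 3 * Real.sqrt 3 = 3 := Real.mul_self_sqrt (by norm_num)
lemma sqrt3_pos : 0 < Real.sqrt 3 := Real.sqrt_pos.mpr (by norm_num)

lemma v0_disc : v0 ∈ disc := by simp [disc, v0]
lemma v1_disc : v1 ∈ disc := by
  simp only [disc, v1, Set.mem_setOf_eq]
  nlinarith [sqrt3_sq]
lemma v2_disc : v2 ∈ disc := by
  simp only [disc, v2, Set.mem_setOf_eq]
  nlinarith [sqrt3_sq]

/-- The affine interpolation taking prescribed values at the triangle's vertices. -/
noncomputable def interp (t0 t1 t2 : ℝ) : (ℝ × ℝ) →ᵃ[ℝ] ℝ :=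
  aff ((t2 - t1) / Real.sqrt 3) ((2 * t0 - t1 - t2) / 3) ((t0 + t1 + t2) / 3)

lemma interp_v0 (t0 t1 t2 : ℝ) : interp t0 t1 t2 v0 = t0 := by
  simp [interp, v0]; ring

lemma interp_v1 (t0 t1 t2 : ℝ) : interp t0 t1 t2 v1 = t1 := by
  have h := sqrt3_sq
  have h3 := sqrt3_pos.ne'
  simp only [interp, v1, aff_apply]
  field_simp
  nlinarith [h]

lemma interp_v2 (t0 t1 t2 : ℝ) : interp t0 t1 t2 v2 = t2 := by
  have h := sqrt3_sq
  have h3 := sqrt3_pos.ne'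
  simp only [interp, v2, aff_apply]
  field_simp
  nlinarith [h]

/-- Two affine maps agreeing on the vertices agree on the triangle. -/
lemma eq_on_triangle (F G : (ℝ × ℝ) →ᵃ[ℝ] ℝ) (h0 : F v0 = G v0) (h1 : F v1 = G v1)
    (h2 : F v2 = G v2) : ∀ x ∈ triangle, F x = G x := by
  intro x hx
  have hc : triangle ⊆ (F - G) ⁻¹' {(0 : ℝ)} := by
    rw [triangle_def]
    apply convexHull_min
    · intro y hy
      simp only [Set.mem_insert_iff, Set.mem_singleton_iff] at hy
      rcases hy with rfl | rfl | rfl <;>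
        simp [AffineMap.coe_sub, Pi.sub_apply, h0, h1, h2]
    · exact (convex_singleton _).affine_preimage _
  have := hc hx
  simp only [Set.mem_preimage, AffineMap.coe_sub, Pi.sub_apply, Set.mem_singleton_iff] at this
  linarith

/-- An affine map with values in `[0,1]` at the vertices has values in `[0,1]` on the triangle. -/
lemma mem_Icc_on_triangle (F : (ℝ × ℝ) →ᵃ[ℝ] ℝ) (h0 : F v0 ∈ Set.Icc (0:ℝ) 1)
    (h1 : F v1 ∈ Set.Icc (0:ℝ) 1) (h2 : F v2 ∈ Set.Icc (0:ℝ) 1) :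
    ∀ x ∈ triangle, F x ∈ Set.Icc (0:ℝ) 1 := by
  intro x hx
  have hc : triangle ⊆ F ⁻¹' Set.Icc (0:ℝ) 1 := by
    rw [triangle_def]
    apply convexHull_min
    · intro y hy
      simp only [Set.mem_insert_iff, Set.mem_singleton_iff] at hy
      rcases hy with rfl | rfl | rfl <;> simpa
    · exact (convex_Icc _ _).affine_preimage _
  exact hc hx

lemma affsum_apply {n : ℕ} (F : Fin n → (ℝ × ℝ) →ᵃ[ℝ] ℝ) (x : ℝ × ℝ) :
    (∑ i, F i) x = ∑ i, F i x := by
  induction n with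
  | zero => simp
  | succ m ih =>
    rw [Fin.sum_univ_succ, Fin.sum_univ_succ (f := fun i => F i x)]
    simp [AffineMap.coe_add, ih (fun i => F i.succ)]

set_option maxHeartbeats 1000000 in
lemma part1 :
    (∀ (n₁ n₂ : ℕ) (f : Fin n₁ → ((ℝ × ℝ) →ᵃ[ℝ] ℝ)) (g : Fin n₂ → ((ℝ × ℝ) →ᵃ[ℝ] ℝ)),
      (∀ i, f i ∈ discEffects) → (∀ j, g j ∈ discEffects) →
      (∀ x ∈ triangle, ∑ i, f i x = 1) → (∀ x ∈ triangle, ∑ j, g j x = 1) →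
      ∃ h : Fin n₁ → Fin n₂ → ((ℝ × ℝ) →ᵃ[ℝ] ℝ),
        (∀ i j, ∀ x ∈ triangle, h i j x ∈ Set.Icc (0 : ℝ) 1) ∧
        (∀ i, ∀ x ∈ triangle, f i x = ∑ j, h i j x) ∧
        (∀ j, ∀ x ∈ triangle, g j x = ∑ i, h i j x)) := by
    -- Part 1: E(K)-compatibility via the simplex product construction.
  intro n₁ n₂ f g hf hg hf1 hg1
  refine ⟨fun i j => interp (f i v0 * g j v0) (f i v1 * g j v1) (f i v2 * g j v2), ?_, ?_, ?_⟩
  · intro i j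
    apply mem_Icc_on_triangle
    · rw [interp_v0]
      have ha := hf i v0 v0_disc; have hb := hg j v0 v0_disc
      exact ⟨mul_nonneg ha.1 hb.1, by nlinarith [ha.1, ha.2, hb.1, hb.2]⟩
    · rw [interp_v1]
      have ha := hf i v1 v1_disc; have hb := hg j v1 v1_disc
      exact ⟨mul_nonneg ha.1 hb.1, by nlinarith [ha.1, ha.2, hb.1, hb.2]⟩
    · rw [interp_v2]
      have ha := hf i v2 v2_disc; have hb := hg j v2 v2_disc
      exact ⟨mul_nonneg ha.1 hb.1, by nlinarith [ha.1, ha.2, hb.1, hb.2]⟩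
  · intro i x hx
    have key := eq_on_triangle (f i)
        (∑ j, interp (f i v0 * g j v0) (f i v1 * g j v1) (f i v2 * g j v2)) ?_ ?_ ?_ x hx
    · rw [key, affsum_apply]
    · rw [affsum_apply]
      simp only [interp_v0]
      rw [← Finset.mul_sum, hg1 v0 v0_mem, mul_one]
    · rw [affsum_apply]
      simp only [interp_v1]
      rw [← Finset.mul_sum, hg1 v1 v1_mem, mul_one]
    · rw [affsum_apply]
      simp only [interp_v2]
      rw [← Finset.mul_sum, hg1 v2 v2_mem, mul_one]
  · intro j x hx
    have key := eq_on_triangle (g j)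
        (∑ i, interp (f i v0 * g j v0) (f i v1 * g j v1) (f i v2 * g j v2)) ?_ ?_ ?_ x hx
    · rw [key, affsum_apply]
    · rw [affsum_apply]
      simp only [interp_v0]
      rw [← Finset.sum_mul, hf1 v0 v0_mem, one_mul]
    · rw [affsum_apply]
      simp only [interp_v1]
      rw [← Finset.sum_mul, hf1 v1 v1_mem, one_mul]
    · rw [affsum_apply]
      simp only [interp_v2]
      rw [← Finset.sum_mul, hf1 v2 v2_mem, one_mul]

set_option maxHeartbeats 1000000 in
lemma part2 :
    (∃ f g : (ℝ × ℝ) →ᵃ[ℝ] ℝ, f ∈ discEffects ∧ g ∈ discEffects ∧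
      ¬∃ h₁₁ h₁₂ h₂₁ h₂₂ : (ℝ × ℝ) →ᵃ[ℝ] ℝ,
        h₁₁ ∈ discEffects ∧ h₁₂ ∈ discEffects ∧ h₂₁ ∈ discEffects ∧ h₂₂ ∈ discEffects ∧
        (∀ x ∈ triangle, h₁₁ x + h₁₂ x = f x) ∧
        (∀ x ∈ triangle, h₁₁ x + h₂₁ x = g x) ∧
        (∀ x ∈ triangle, h₁₁ x + h₁₂ x + h₂₁ x + h₂₂ x = 1)) := by
    -- Part 2: the pair f = (1+x)/2, g = (1+y)/2 is E-incompatible.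
  refine ⟨aff (1/2) 0 (1/2), aff 0 (1/2) (1/2), ?_, ?_, ?_⟩
  · intro x hx
    simp only [disc, Set.mem_setOf_eq] at hx
    simp only [aff_apply, Set.mem_Icc]
    constructor <;> nlinarith [sq_nonneg x.1, sq_nonneg x.2, sq_nonneg (x.1 - 1), sq_nonneg (x.1 + 1)]
  · intro x hx
    simp only [disc, Set.mem_setOf_eq] at hx
    simp only [aff_apply, Set.mem_Icc]
    constructor <;> nlinarith [sq_nonneg x.1, sq_nonneg x.2, sq_nonneg (x.2 - 1), sq_nonneg (x.2 + 1)]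
  · rintro ⟨h₁₁, h₁₂, h₂₁, h₂₂, e11, e12, e21, e22, hE1, hE2, hE3⟩
    -- Equalities on the triangle extend to all of ℝ² (the vertices affinely span ℝ²).
    set w : ℝ := Real.sqrt 2 / 2 with hw
    have hw2 : w * w = 1 / 2 := by
      rw [hw]; rw [div_mul_div_comm, Real.mul_self_sqrt (by norm_num)]; norm_num
    have hwpos : 0 < w := by positivity
    have hwgt : 1 / 2 < w := by nlinarith
    have hdisc : ∀ s t : ℝ, (s = w ∨ s = -w) → (t = w ∨ t = -w) → ((s, t) : ℝ × ℝ) ∈ disc := by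
      intro s t hs ht
      simp only [disc, Set.mem_setOf_eq]
      rcases hs with rfl | rfl <;> rcases ht with rfl | rfl <;> nlinarith
    -- extend the equalities globally
    have decomp : ∀ (H : (ℝ × ℝ) →ᵃ[ℝ] ℝ) (q : ℝ × ℝ),
      H q = q.1 * (H (1, 0) - H (0, 0)) + q.2 * (H (0, 1) - H (0, 0)) + H (0, 0) := by
      intro H q
      have hdec : ∀ r : ℝ × ℝ, H r = H.linear r + H (0, 0) := by
        intro r
        have := H.map_vadd ((0, 0) : ℝ × ℝ) r
        simpa [vadd_eq_add, Prod.mk_zero_zero] using this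
      have hq : q = q.1 • ((1 : ℝ), (0 : ℝ)) + q.2 • ((0 : ℝ), (1 : ℝ)) := by
        ext <;> simp
      rw [hdec q, hdec (1, 0), hdec (0, 1)]
      nth_rewrite 1 [hq]
      rw [map_add, map_smul, map_smul]
      simp only [smul_eq_mul]
      ring
    have glob : ∀ (F G : (ℝ × ℝ) →ᵃ[ℝ] ℝ), (∀ x ∈ triangle, F x = G x) → ∀ p, F p = G p := by
      intro F G hFG p
      have h0' : F v0 = G v0 := hFG _ v0_mem
      have h1' : F v1 = G v1 := hFG _ v1_mem
      have h2' : F v2 = G v2 := hFG _ v2_mem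
      rw [decomp F, decomp G] at h0' h1' h2' ⊢
      simp only [v0, v1, v2] at h0' h1' h2'
      have hA : (F (1, 0) - F (0, 0)) = (G (1, 0) - G (0, 0)) := by
        have h12 : Real.sqrt 3 * ((F (1, 0) - F (0, 0)) - (G (1, 0) - G (0, 0))) = 0 := by
          linear_combination h2' - h1'
        rcases mul_eq_zero.mp h12 with h | h
        · exact absurd h sqrt3_pos.ne'
        · linarith
      have hC : F ((0 : ℝ), (0 : ℝ)) = G ((0 : ℝ), (0 : ℝ)) := by
        linear_combination (2/3 : ℝ) * h1' + (1/3 : ℝ) * h0' + (Real.sqrt 3 / 3) * hA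
      linear_combination p.1 * hA + p.2 * h0' + (1 - p.2) * hC
    have gE1 : ∀ p : ℝ × ℝ, h₁₁ p + h₁₂ p = aff (1/2) 0 (1/2) p := by
      intro p
      have := glob (h₁₁ + h₁₂) (aff (1/2) 0 (1/2))
        (fun x hx => by simpa [AffineMap.coe_add] using hE1 x hx) p
      simpa [AffineMap.coe_add] using this
    have gE2 : ∀ p : ℝ × ℝ, h₁₁ p + h₂₁ p = aff 0 (1/2) (1/2) p := by
      intro p
      have := glob (h₁₁ + h₂₁) (aff 0 (1/2) (1/2))
        (fun x hx => by simpa [AffineMap.coe_add] using hE2 x hx) p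
      simpa [AffineMap.coe_add] using this
    have gE3 : ∀ p : ℝ × ℝ, h₁₁ p + h₁₂ p + h₂₁ p + h₂₂ p = 1 := by
      intro p
      have := glob (h₁₁ + h₁₂ + h₂₁ + h₂₂) (AffineMap.const ℝ (ℝ × ℝ) (1 : ℝ))
        (fun x hx => by simpa [AffineMap.coe_add, AffineMap.coe_const] using hE3 x hx) p
      simpa [AffineMap.coe_add, AffineMap.coe_const] using this
    -- midpoint identity: h₁₁ P + h₁₁ Q = h₁₁ R + h₁₁ S
    have hmidPQ : h₁₁ ((-w, -w) : ℝ × ℝ) + h₁₁ ((w, w) : ℝ × ℝ) =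
      h₁₁ ((-w, w) : ℝ × ℝ) + h₁₁ ((w, -w) : ℝ × ℝ) := by
      have m1 := h₁₁.map_midpoint ((-w, -w) : ℝ × ℝ) ((w, w) : ℝ × ℝ)
      have m2 := h₁₁.map_midpoint ((-w, w) : ℝ × ℝ) ((w, -w) : ℝ × ℝ)
      have e1 : midpoint ℝ ((-w, -w) : ℝ × ℝ) ((w, w) : ℝ × ℝ) = ((0 : ℝ), (0 : ℝ)) := by
        rw [midpoint_eq_smul_add]
        ext <;> simp
      have e2 : midpoint ℝ ((-w, w) : ℝ × ℝ) ((w, -w) : ℝ × ℝ) = ((0 : ℝ), (0 : ℝ)) := by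
        rw [midpoint_eq_smul_add]
        ext <;> simp
      rw [e1] at m1; rw [e2] at m2
      rw [midpoint_eq_smul_add, smul_eq_mul, invOf_eq_inv] at m1 m2
      rw [m1] at m2
      field_simp at m2
      linarith [m2]
    -- the four inequalities
    have i1 : 0 ≤ h₁₁ ((-w, -w) : ℝ × ℝ) := (e11 _ (hdisc _ _ (Or.inr rfl) (Or.inr rfl))).1
    have i4 : w ≤ h₁₁ ((w, w) : ℝ × ℝ) := by
      have h22pos : 0 ≤ h₂₂ ((w, w) : ℝ × ℝ) := (e22 _ (hdisc _ _ (Or.inl rfl) (Or.inl rfl))).1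
      have e3 := gE3 ((w, w) : ℝ × ℝ)
      have e1 := gE1 ((w, w) : ℝ × ℝ)
      have e2 := gE2 ((w, w) : ℝ × ℝ)
      simp only [aff_apply] at e1 e2
      nlinarith
    have i2 : h₁₁ ((-w, w) : ℝ × ℝ) ≤ (1 - w) / 2 := by
      have hp : 0 ≤ h₁₂ ((-w, w) : ℝ × ℝ) := (e12 _ (hdisc _ _ (Or.inr rfl) (Or.inl rfl))).1
      have e1 := gE1 ((-w, w) : ℝ × ℝ)
      simp only [aff_apply] at e1
      nlinarith
    have i3 : h₁₁ ((w, -w) : ℝ × ℝ) ≤ (1 - w) / 2 := by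
      have hp : 0 ≤ h₂₁ ((w, -w) : ℝ × ℝ) := (e21 _ (hdisc _ _ (Or.inl rfl) (Or.inr rfl))).1
      have e2 := gE2 ((w, -w) : ℝ × ℝ)
      simp only [aff_apply] at e2
      nlinarith
    nlinarith [hmidPQ]

/-- Triangle-in-circle: every pair of measurements with effects in `E` is
`E(K)`-compatible (since the triangle is a simplex), but there is a pair of
two-outcome measurements with effects in `E` that admits no joint measurement
with effects in `E`. -/
theorem triangle_in_circle_EK_compatible_but_E_incompatible :
    (∀ (n₁ n₂ : ℕ) (f : Fin n₁ → ((ℝ × ℝ) →ᵃ[ℝ] ℝ)) (g : Fin n₂ → ((ℝ × ℝ) →ᵃ[ℝ] ℝ)),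
      (∀ i, f i ∈ discEffects) → (∀ j, g j ∈ discEffects) →
      (∀ x ∈ triangle, ∑ i, f i x = 1) → (∀ x ∈ triangle, ∑ j, g j x = 1) →
      ∃ h : Fin n₁ → Fin n₂ → ((ℝ × ℝ) →ᵃ[ℝ] ℝ),
        (∀ i j, ∀ x ∈ triangle, h i j x ∈ Set.Icc (0 : ℝ) 1) ∧
        (∀ i, ∀ x ∈ triangle, f i x = ∑ j, h i j x) ∧
        (∀ j, ∀ x ∈ triangle, g j x = ∑ i, h i j x)) ∧
    (∃ f g : (ℝ × ℝ) →ᵃ[ℝ] ℝ, f ∈ discEffects ∧ g ∈ discEffects ∧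
      ¬∃ h₁₁ h₁₂ h₂₁ h₂₂ : (ℝ × ℝ) →ᵃ[ℝ] ℝ,
        h₁₁ ∈ discEffects ∧ h₁₂ ∈ discEffects ∧ h₂₁ ∈ discEffects ∧ h₂₂ ∈ discEffects ∧
        (∀ x ∈ triangle, h₁₁ x + h₁₂ x = f x) ∧
        (∀ x ∈ triangle, h₁₁ x + h₂₁ x = g x) ∧
        (∀ x ∈ triangle, h₁₁ x + h₁₂ x + h₂₁ x + h₂₂ x = 1)) := by
  exact ⟨part1, part2⟩
end
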